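/- Let γ ∈ ℝ^{M×R} with columns γ(·,1),…,γ(·,R), and let ρ_1, …, ρ_R : ℝ^M → ℝ be (evaluations of) multivariate polynomials. If there exists a point x* ∈ ℝ^M such that the span of {ρ_1(x*) • γ(·,1), …, ρ_R(x*) • γ(·,R)} has dimension equal to rank γ, then for Lebesgue-almost every x ∈ ℝ^M the span of {ρ_1(x) • γ(·,1), …, ρ_R(x) • γ(·,R)} has dimension equal to rank γ. (Theorem 6: if a chemical reaction is controllable at one point, it is controllable almost everywhere.) -/

import Mathlib

open MeasureTheory

/-- The zero set of a nonzero multivariate real polynomial is Lebesgue-null. -/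
lemma ae_eval_ne_zero : ∀ (n : ℕ) (p : MvPolynomial (Fin n) ℝ), p ≠ 0 →
    ∀ᵐ x : Fin n → ℝ ∂volume, MvPolynomial.eval x p ≠ 0 := by
  intro n
  induction n with
  | zero =>
    intro p hp
    refine ae_of_all _ fun x => ?_
    obtain ⟨c, rfl⟩ := MvPolynomial.C_surjective (Fin 0) p
    have hc : c ≠ 0 := fun h => hp (by simp [h])
    simpa using hc
  | succ n ih =>
    intro p hp
    set q := MvPolynomial.finSuccEquiv ℝ n p with hqdef
    have hq0 : q ≠ 0 := by
      simp only [hqdef, ne_eq, EmbeddingLike.map_eq_zero_iff]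
      exact hp
    have hlead : q.leadingCoeff ≠ 0 := Polynomial.leadingCoeff_ne_zero.mpr hq0
    -- the bad set on the product space
    set s : Set (ℝ × (Fin n → ℝ)) :=
      {z | MvPolynomial.eval (Fin.cons z.1 z.2 : Fin (n + 1) → ℝ) p = 0} with hsdef
    have hcont : Continuous fun z : ℝ × (Fin n → ℝ) =>
        MvPolynomial.eval (Fin.cons z.1 z.2 : Fin (n + 1) → ℝ) p := by
      apply (MvPolynomial.continuous_eval p).comp
      refine continuous_pi fun i => ?_
      refine Fin.cases ?_ (fun j => ?_) i
      · simpa using continuous_fst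
      · simpa [Function.comp_def] using (continuous_apply j).comp continuous_snd
    have hs : MeasurableSet s := (hcont.measurable (measurableSet_singleton 0))
    -- slices over the second coordinate are null for a.e. second coordinate
    have hslice : ∀ᵐ y : Fin n → ℝ ∂volume,
        (volume : Measure ℝ) {a | (a, y) ∈ s} = 0 := by
      filter_upwards [ih q.leadingCoeff hlead] with y hy
      have hmap : q.map (MvPolynomial.eval y) ≠ 0 := by
        intro h
        have : (q.map (MvPolynomial.eval y)).coeff q.natDegree = 0 := by rw [h]; simp
        rw [Polynomial.coeff_map] at this
        exact hy this
      have hfin : {a : ℝ | (a, y) ∈ s}.Finite := by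
        refine Set.Finite.subset (Polynomial.finite_setOf_isRoot hmap) ?_
        intro a ha
        have := MvPolynomial.eval_eq_eval_mv_eval' y a p
        simp only [hsdef, Set.mem_setOf_eq] at ha
        show Polynomial.eval a (Polynomial.map (MvPolynomial.eval y) q) = 0
        rw [hqdef, ← this]; exact ha
      exact hfin.measure_zero _
    -- hence the product set is null
    have hprodnull : (volume : Measure (ℝ × (Fin n → ℝ))) s = 0 := by
      have hswap : MeasurableSet (Prod.swap ⁻¹' s : Set ((Fin n → ℝ) × ℝ)) :=
        hs.preimage measurable_swap
      have h1 : (volume : Measure (ℝ × (Fin n → ℝ))) s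
          = ((volume : Measure (Fin n → ℝ)).prod (volume : Measure ℝ))
            (Prod.swap ⁻¹' s) := by
        have := Measure.prod_swap (μ := (volume : Measure (Fin n → ℝ)))
          (ν := (volume : Measure ℝ))
        calc (volume : Measure (ℝ × (Fin n → ℝ))) s
            = ((volume : Measure ℝ).prod (volume : Measure (Fin n → ℝ))) s := rfl
          _ = (Measure.map Prod.swap
                ((volume : Measure (Fin n → ℝ)).prod (volume : Measure ℝ))) s := by rw [this]
          _ = _ := Measure.map_apply measurable_swap hs
      rw [h1, Measure.measure_prod_null hswap]
      filter_upwards [hslice] with y hy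
      exact hy
    -- transfer to the pi space
    have mp := volume_preserving_piFinSuccAbove (fun _ : Fin (n + 1) => ℝ) 0
    have : ∀ᵐ z : ℝ × (Fin n → ℝ) ∂volume,
        MvPolynomial.eval (Fin.cons z.1 z.2 : Fin (n + 1) → ℝ) p ≠ 0 := by
      rw [ae_iff]
      simpa [hsdef, Set.setOf_mem_eq] using hprodnull
    have := mp.quasiMeasurePreserving.ae this
    filter_upwards [this] with x hx
    have hx' : MvPolynomial.eval
        (Fin.cons (x 0) (fun j => x (Fin.succAbove 0 j)) : Fin (n + 1) → ℝ) p ≠ 0 := hx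
    have hcons : (Fin.cons (x 0) (fun j => x (Fin.succAbove 0 j)) : Fin (n + 1) → ℝ) = x := by
      funext i
      refine Fin.cases rfl (fun j => ?_) i
      simp [Fin.succAbove]
    rwa [hcons] at hx'

/-- Span of scaled vectors equals span of the vectors with nonzero scalars. -/
lemma span_smul_eq_span_image {R V : ℕ} (c : Fin R → ℝ) (v : Fin R → (Fin V → ℝ)) :
    Submodule.span ℝ (Set.range fun r => c r • v r)
      = Submodule.span ℝ (v '' {r | c r ≠ 0}) := by
  apply le_antisymm
  · rw [Submodule.span_le]
    rintro _ ⟨r, rfl⟩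
    by_cases h : c r = 0
    · simp [h]
    · exact Submodule.smul_mem _ _ (Submodule.subset_span ⟨r, h, rfl⟩)
  · rw [Submodule.span_le]
    rintro _ ⟨r, hr, rfl⟩
    have hv : v r = (c r)⁻¹ • (c r • v r) := by
      rw [smul_smul, inv_mul_cancel₀ hr, one_smul]
    rw [hv]
    exact Submodule.smul_mem _ _ (Submodule.subset_span ⟨r, rfl⟩)

/-- Theorem 6: if at some point `x*` the span of the vectors
`ρ_r(x*) • γ(·,r)` has dimension `rank γ` (i.e. the reaction is controllable at `x*`),
then the same holds for Lebesgue-almost every `x ∈ ℝ^M`. -/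
theorem controllable_at_point_implies_ae_controllable (M R : ℕ)
    (γ : Matrix (Fin M) (Fin R) ℝ) (ρ : Fin R → MvPolynomial (Fin M) ℝ)
    (xstar : Fin M → ℝ)
    (h : Module.finrank ℝ (Submodule.span ℝ (Set.range fun r =>
        MvPolynomial.eval xstar (ρ r) • (fun m => γ m r : Fin M → ℝ))) = γ.rank) :
    ∀ᵐ x : Fin M → ℝ ∂volume,
      Module.finrank ℝ (Submodule.span ℝ (Set.range fun r =>
        MvPolynomial.eval x (ρ r) • (fun m => γ m r : Fin M → ℝ))) = γ.rank := by
  classical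
  set v : Fin R → (Fin M → ℝ) := fun r => (fun m => γ m r) with hv
  -- the column span of γ has dimension rank γ
  have hcol : γ.rank = Module.finrank ℝ (Submodule.span ℝ (Set.range v)) := by
    rw [Matrix.rank_eq_finrank_span_cols]
    rfl
  set S : Set (Fin R) := {r | MvPolynomial.eval xstar (ρ r) ≠ 0} with hSdef
  have hS : Module.finrank ℝ (Submodule.span ℝ (v '' S)) = γ.rank := by
    rw [← span_smul_eq_span_image (fun r => MvPolynomial.eval xstar (ρ r)) v]
    exact h
  -- the product polynomial over S
  set Sfin : Finset (Fin R) := Finset.univ.filter (fun r => MvPolynomial.eval xstar (ρ r) ≠ 0)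
    with hSfin
  set P : MvPolynomial (Fin M) ℝ := ∏ r ∈ Sfin, ρ r with hP
  have hPstar : MvPolynomial.eval xstar P ≠ 0 := by
    rw [hP, map_prod]
    rw [Finset.prod_ne_zero_iff]
    intro r hr
    exact (Finset.mem_filter.mp hr).2
  have hPne : P ≠ 0 := fun h0 => hPstar (by rw [h0]; simp)
  filter_upwards [ae_eval_ne_zero M P hPne] with x hx
  have hxr : ∀ r ∈ S, MvPolynomial.eval x (ρ r) ≠ 0 := by
    intro r hr
    intro h0
    apply hx
    rw [hP, map_prod]
    refine Finset.prod_eq_zero (i := r) ?_ h0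
    simp only [hSfin, Finset.mem_filter, Finset.mem_univ, true_and]
    exact hr
  rw [span_smul_eq_span_image (fun r => MvPolynomial.eval x (ρ r)) v]
  apply le_antisymm
  · rw [hcol]
    apply Submodule.finrank_mono
    apply Submodule.span_mono
    exact Set.image_mono (f := v) (Set.subset_univ _) |>.trans (by rw [Set.image_univ])
  · rw [← hS]
    apply Submodule.finrank_mono
    apply Submodule.span_mono
    exact Set.image_mono (f := v) hxr
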